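/- The operator T_i = c_i(x)·s_i - d_i(x), where d_i(x) = c_i(x) - χ_i, acting on polynomials in n variables, satisfies T_i² = t_i² · id for i ∈ {0,n} and T_i² = id for i ∈ {1,...,n-1}. -/

import Mathlib

noncomputable section

/-- The difference-reflection operator T = c(x)·s − d(x), d = c − χ. -/
def TRefl {n : ℕ} (c : (Fin n → ℂ) → ℂ) (χ : ℂ) (s : (Fin n → ℂ) → (Fin n → ℂ))
    (f : (Fin n → ℂ) → ℂ) : (Fin n → ℂ) → ℂ :=
  fun x => c x * f (s x) - (c x - χ) * f x

/-- T_i² = t_i²·id for i = 0, n and T_i² = id for the middle indices, acting on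
(evaluations of) polynomials in n variables, at points where a_i(x) ≠ 0. -/
theorem stmt4 (n : ℕ) (hn : 0 < n) (t0 u0 t tn un : ℂ) (p : MvPolynomial (Fin n) ℂ) :
    -- i = 0 : c₀(x) = (t₀+u₀+(1-2x₁)/2)(t₀-u₀+(1-2x₁)/2)/(1-2x₁), s₀ x₁ = 1-x₁, χ₀ = t₀
    (∀ x : Fin n → ℂ, 1 - 2 * x ⟨0, hn⟩ ≠ 0 →
      TRefl (fun y => (t0 + u0 + (1 - 2 * y ⟨0, hn⟩) / 2) * (t0 - u0 + (1 - 2 * y ⟨0, hn⟩) / 2)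
            / (1 - 2 * y ⟨0, hn⟩)) t0
          (fun y => Function.update y ⟨0, hn⟩ (1 - y ⟨0, hn⟩))
        (TRefl (fun y => (t0 + u0 + (1 - 2 * y ⟨0, hn⟩) / 2) * (t0 - u0 + (1 - 2 * y ⟨0, hn⟩) / 2)
            / (1 - 2 * y ⟨0, hn⟩)) t0
          (fun y => Function.update y ⟨0, hn⟩ (1 - y ⟨0, hn⟩))
          (fun y => MvPolynomial.eval y p)) x
      = t0 ^ 2 * MvPolynomial.eval x p) ∧
    -- 1 ≤ i ≤ n-1 : c_i(x) = (t + x_i - x_{i+1})/(x_i - x_{i+1}), s_i swaps x_i, x_{i+1}, χ_i = 1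
    (∀ i j : Fin n, (i : ℕ) + 1 = (j : ℕ) → ∀ x : Fin n → ℂ, x i ≠ x j →
      TRefl (fun y => (t + (y i - y j)) / (y i - y j)) 1 (fun y => y ∘ Equiv.swap i j)
        (TRefl (fun y => (t + (y i - y j)) / (y i - y j)) 1 (fun y => y ∘ Equiv.swap i j)
          (fun y => MvPolynomial.eval y p)) x
      = MvPolynomial.eval x p) ∧
    -- i = n : cₙ(x) = (tₙ+uₙ+xₙ)(tₙ-uₙ+xₙ)/(2xₙ), sₙ negates xₙ, χₙ = tₙ
    (∀ x : Fin n → ℂ, x ⟨n - 1, by omega⟩ ≠ 0 →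
      TRefl (fun y => (tn + un + y ⟨n - 1, by omega⟩) * (tn - un + y ⟨n - 1, by omega⟩)
            / (2 * y ⟨n - 1, by omega⟩)) tn
          (fun y => Function.update y ⟨n - 1, by omega⟩ (-(y ⟨n - 1, by omega⟩)))
        (TRefl (fun y => (tn + un + y ⟨n - 1, by omega⟩) * (tn - un + y ⟨n - 1, by omega⟩)
            / (2 * y ⟨n - 1, by omega⟩)) tn
          (fun y => Function.update y ⟨n - 1, by omega⟩ (-(y ⟨n - 1, by omega⟩)))
          (fun y => MvPolynomial.eval y p)) x
      = tn ^ 2 * MvPolynomial.eval x p) := by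
  refine ⟨?_, ?_, ?_⟩
  · intro x hx
    set i : Fin n := ⟨0, hn⟩
    have hss : Function.update (Function.update x i (1 - x i)) i
        (1 - Function.update x i (1 - x i) i) = x := by
      simp [Function.update_idem]
    simp only [TRefl, Function.update_self, hss]
    simp only [sub_sub_cancel, Function.update_idem, Function.update_eq_self]
    have hx2 : (1 : ℂ) - 2 * (1 - x i) ≠ 0 := by
      intro h; apply hx; linear_combination -h
    set A := MvPolynomial.eval x p
    set B := MvPolynomial.eval (Function.update x i (1 - x i)) p
    field_simp
    ring
  · intro i j hij x hx
    have hsub : x i - x j ≠ 0 := sub_ne_zero.mpr hx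
    have hss : (x ∘ ⇑(Equiv.swap i j)) ∘ ⇑(Equiv.swap i j) = x := by
      funext k; simp [Function.comp, Equiv.swap_apply_self]
    simp only [TRefl, Function.comp_apply, Equiv.swap_apply_left, Equiv.swap_apply_right, hss]
    have hsub2 : x j - x i ≠ 0 := sub_ne_zero.mpr (Ne.symm hx)
    set A := MvPolynomial.eval x p
    set B := MvPolynomial.eval (x ∘ ⇑(Equiv.swap i j)) p
    field_simp
    ring
  · intro x hx
    set i : Fin n := ⟨n - 1, by omega⟩
    have hss : Function.update (Function.update x i (-(x i))) i
        (-(Function.update x i (-(x i)) i)) = x := by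
      simp [Function.update_idem]
    simp only [TRefl, Function.update_self, hss]
    simp only [neg_neg, Function.update_idem, Function.update_eq_self]
    have hx2 : (2 : ℂ) * x i ≠ 0 := by simp [hx]
    have hx3 : (2 : ℂ) * -(x i) ≠ 0 := by simp [hx]
    set A := MvPolynomial.eval x p
    set B := MvPolynomial.eval (Function.update x i (-(x i))) p
    field_simp
    ring
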